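/- arXiv:1311.0128 — 4 statements merged into one kernel-verified Lean document; each statement's English description precedes it below -/
import Mathlib

section
/- Let λ, c > 0, t > 0, and let (x₁, x₂) ∈ ℝ² satisfy x₁² + x₂² < c²t². Set a = √(c²t² − x₁² − x₂²). Then ∫_{−a}^{a} (λ/(2c))² · (1/(π sinh(λt))) · I₁((λ/c)√(c²t² − x₁² − x₂² − x₃²)) / √(c²t² − x₁² − x₂² − x₃²) dx₃ = (λ/(2πc)) · (1/sinh(λt)) · ( cosh((λ/c) a) − 1 ) / a. -/
open Real

/-- The modified Bessel function of order one,
`I₁(x) = Σ_{k=0}^∞ (x/2)^{2k+1} / (k! (k+1)!)`. -/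
noncomputable def besselI1 (x : ℝ) : ℝ :=
  ∑' k : ℕ, (x / 2) ^ (2 * k + 1) / ((k.factorial : ℝ) * ((k + 1).factorial : ℝ))

lemma moment_int (a : ℝ) (k : ℕ) :
    ∫ x in (-a)..a, (a^2 - x^2)^k
      = a^(2*k+1) * (4^k * (k.factorial:ℝ)^2 * 2 / ((2*k+1).factorial : ℝ)) := by
  induction k with
  | zero => simp; ring
  | succ k ih =>
    have hcont : ∀ m : ℕ, IntervalIntegrable (fun x : ℝ => (a^2 - x^2)^m) MeasureTheory.volume (-a) a := by
      intro m
      exact (Continuous.pow (by continuity) m).intervalIntegrable _ _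
    have hderiv : ∀ x : ℝ, HasDerivAt (fun x : ℝ => x * (a^2 - x^2)^(k+1))
        (((2*(k:ℝ)+3) * (a^2 - x^2)^(k+1) - 2*((k:ℝ)+1)*a^2*(a^2 - x^2)^k)) x := by
      intro x
      have h1 : HasDerivAt (fun x : ℝ => (a^2 - x^2)^(k+1))
          (((k:ℝ)+1) * (a^2 - x^2)^k * (-(2*x))) x := by
        have := ((hasDerivAt_pow 2 x).const_sub (a^2)).pow (k+1)
        exact this.congr_deriv (by simp)
      have := (hasDerivAt_id x).mul h1
      refine this.congr_deriv ?_
      simp only [id_eq]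
      ring
    have hint0 : ∫ x in (-a)..a,
        (((2*(k:ℝ)+3) * (a^2 - x^2)^(k+1) - 2*((k:ℝ)+1)*a^2*(a^2 - x^2)^k)) = 0 := by
      rw [intervalIntegral.integral_eq_sub_of_hasDerivAt (fun x _ => hderiv x)]
      · simp [show a^2 - a^2 = 0 by ring]
      · apply Continuous.intervalIntegrable
        continuity
    rw [intervalIntegral.integral_sub ((hcont (k+1)).const_mul _) (((hcont k).const_mul _)),
        intervalIntegral.integral_const_mul, intervalIntegral.integral_const_mul, ih, sub_eq_zero] at hint0
    have h23 : (2*(k:ℝ)+3) ≠ 0 := by positivity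
    have key : ∫ x in (-a)..a, (a^2-x^2)^(k+1)
        = 2*((k:ℝ)+1)*a^2* (a^(2*k+1) * (4^k * (k.factorial:ℝ)^2 * 2 / ((2*k+1).factorial : ℝ))) / (2*(k:ℝ)+3) := by
      field_simp at hint0 ⊢
      linarith [hint0]
    rw [key]
    have hfac : ((2*(k+1)+1).factorial : ℝ) = (2*(k:ℝ)+3) * (2*(k:ℝ)+2) * ((2*k+1).factorial : ℝ) := by
      have h : 2*(k+1)+1 = (2*k+1) + 1 + 1 := by ring
      rw [h, Nat.factorial_succ, Nat.factorial_succ]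
      push_cast; ring
    have hfac2 : ((k+1).factorial : ℝ) = ((k:ℝ)+1) * (k.factorial : ℝ) := by
      rw [Nat.factorial_succ]; push_cast; ring
    have hpow : a^(2*(k+1)+1) = a^(2*k+1) * a^2 := by ring
    rw [hfac, hfac2, hpow]
    have hf1 : ((2*k+1).factorial : ℝ) ≠ 0 := by positivity
    field_simp
    ring

lemma summable_aux (y : ℝ) (hy : 0 ≤ y) :
    Summable (fun k : ℕ => 2 * y^(2*k+1) / ((2*k+2).factorial : ℝ)) := by
  have h2 : Summable (fun k : ℕ => y^(2*k+1) / ((2*k+1).factorial : ℝ)) :=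
    (Real.summable_pow_div_factorial y).comp_injective (fun a b hab => by omega)
  apply Summable.of_nonneg_of_le (fun k => by positivity) (fun k => ?_) (h2.mul_left 2)
  rw [mul_div_assoc]
  apply mul_le_mul_of_nonneg_left ?_ (by norm_num)
  apply div_le_div_of_nonneg_left (by positivity) (by positivity)
  exact_mod_cast Nat.factorial_le (by omega)

lemma tsum_aux (y : ℝ) (hy : 0 < y) :
    ∑' k : ℕ, 2 * y^(2*k+1) / ((2*k+2).factorial : ℝ) = 2/y * (Real.cosh y - 1) := by
  have hc := Real.cosh_eq_tsum y
  have hs : Summable (fun n : ℕ => y ^ (2 * n) / ((2 * n).factorial : ℝ)) :=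
    (Real.summable_pow_div_factorial y).comp_injective (fun a b hab => by omega)
  rw [hs.tsum_eq_zero_add] at hc
  simp at hc
  have h1 : ∑' k : ℕ, y ^ (2 * (k+1)) / ((2 * (k+1)).factorial : ℝ) = Real.cosh y - 1 := by
    linarith [hc]
  rw [← h1, ← tsum_mul_left]
  congr 1; ext k
  have h2 : (2*(k+1)) = 2*k+2 := by ring
  rw [h2]
  field_simp
  ring

lemma besselI1_div (b s : ℝ) (hs : 0 < s) :
    besselI1 (b * s) / s
      = ∑' k : ℕ, b^(2*k+1) * (s^2)^k / (2^(2*k+1) * (k.factorial:ℝ) * ((k+1).factorial:ℝ)) := by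
  unfold besselI1
  rw [← tsum_div_const]
  apply tsum_congr
  intro k
  have hs' : s ≠ 0 := hs.ne'
  have hk : (k.factorial : ℝ) ≠ 0 := by positivity
  have hk1 : ((k+1).factorial : ℝ) ≠ 0 := by positivity
  rw [← pow_mul]
  field_simp
  rw [← mul_pow, div_mul_cancel₀ _ two_ne_zero]
  ring

/-- projection onto the plane of the absolutely continuous
component of the law of `X₃(t)`: for `x₁² + x₂² < c²t²`, with
`a = √(c²t² - x₁² - x₂²)`,
`∫_{-a}^{a} (λ/(2c))² (1/(π sinh λt)) I₁((λ/c)√(c²t²-x₁²-x₂²-x₃²))/√(c²t²-x₁²-x₂²-x₃²) dx₃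
   = (λ/(2πc)) (1/sinh λt) (cosh((λ/c)a) - 1)/a`. -/
theorem statement13 (lam c t x₁ x₂ : ℝ) (hlam : 0 < lam) (hc : 0 < c) (ht : 0 < t)
    (hx : x₁ ^ 2 + x₂ ^ 2 < c ^ 2 * t ^ 2) :
    (∫ x₃ in (-Real.sqrt (c ^ 2 * t ^ 2 - x₁ ^ 2 - x₂ ^ 2))..
        (Real.sqrt (c ^ 2 * t ^ 2 - x₁ ^ 2 - x₂ ^ 2)),
      (lam / (2 * c)) ^ 2 * (1 / (π * Real.sinh (lam * t))) *
        besselI1 (lam / c * Real.sqrt (c ^ 2 * t ^ 2 - x₁ ^ 2 - x₂ ^ 2 - x₃ ^ 2)) /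
        Real.sqrt (c ^ 2 * t ^ 2 - x₁ ^ 2 - x₂ ^ 2 - x₃ ^ 2))
    = lam / (2 * π * c) * (1 / Real.sinh (lam * t)) *
        (Real.cosh (lam / c * Real.sqrt (c ^ 2 * t ^ 2 - x₁ ^ 2 - x₂ ^ 2)) - 1) /
        Real.sqrt (c ^ 2 * t ^ 2 - x₁ ^ 2 - x₂ ^ 2) := by
  set A : ℝ := c ^ 2 * t ^ 2 - x₁ ^ 2 - x₂ ^ 2 with hAdef
  have hApos : 0 < A := by rw [hAdef]; linarith
  set a : ℝ := Real.sqrt A with hadef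
  have ha : 0 < a := Real.sqrt_pos.2 hApos
  have ha2 : a ^ 2 = A := Real.sq_sqrt hApos.le
  set b : ℝ := lam / c with hbdef
  have hb : 0 < b := div_pos hlam hc
  set K : ℝ := (lam / (2 * c)) ^ 2 * (1 / (π * Real.sinh (lam * t))) with hKdef
  have hsinh : 0 < Real.sinh (lam * t) := Real.sinh_pos_iff.2 (by positivity)
  have hK : 0 < K := by
    rw [hKdef]
    have : 0 < π := Real.pi_pos
    positivity
  -- the termwise functions
  set G : ℕ → ℝ → ℝ := fun k x =>
    K * (b^(2*k+1) / (2^(2*k+1) * (k.factorial:ℝ) * ((k+1).factorial:ℝ))) * (A - x^2)^k with hGdef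
  have hle : -a ≤ a := by linarith
  rw [intervalIntegral.integral_of_le hle, MeasureTheory.integral_Ioc_eq_integral_Ioo]
  have hcongr : Set.EqOn
      (fun x₃ => K * besselI1 (b * Real.sqrt (A - x₃ ^ 2)) / Real.sqrt (A - x₃ ^ 2))
      (fun x => ∑' k : ℕ, G k x) (Set.Ioo (-a) a) := by
    intro x hx'
    obtain ⟨h1, h2⟩ := hx'
    have hx2 : x^2 < A := by
      rw [← ha2]; exact sq_lt_sq' h1 h2
    have hpos : 0 < A - x^2 := by linarith
    have hs : 0 < Real.sqrt (A - x^2) := Real.sqrt_pos.2 hpos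
    have hs2 : (Real.sqrt (A - x^2))^2 = A - x^2 := Real.sq_sqrt hpos.le
    simp only
    rw [mul_div_assoc, besselI1_div b _ hs, hs2, ← tsum_mul_left]
    apply tsum_congr
    intro k
    rw [hGdef]
    ring
  rw [MeasureTheory.setIntegral_congr_fun measurableSet_Ioo hcongr]
  -- integrability of each term
  have hGcont : ∀ k, Continuous (G k) := by
    intro k
    rw [hGdef]
    continuity
  have hInt : ∀ k, MeasureTheory.Integrable (G k)
      (MeasureTheory.volume.restrict (Set.Ioo (-a) a)) := by
    intro k
    apply MeasureTheory.IntegrableOn.mono_set (t := Set.Icc (-a) a) ?_ Set.Ioo_subset_Icc_self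
    exact (hGcont k).integrableOn_Icc
  -- value of each term integral
  have h2pow : ∀ k : ℕ, (2:ℝ)^(2*k+1) = 2 * 4^k := by
    intro k; rw [pow_succ, pow_mul]; norm_num; ring
  have hval : ∀ k, ∫ x in Set.Ioo (-a) a, G k x
      = K * (2 * (b*a)^(2*k+1) / ((2*k+2).factorial : ℝ)) := by
    intro k
    rw [← MeasureTheory.integral_Ioc_eq_integral_Ioo, ← intervalIntegral.integral_of_le hle]
    simp only [hGdef]
    rw [intervalIntegral.integral_const_mul, ← ha2, moment_int a k]
    have hfac : ((2*k+2).factorial : ℝ) = (2*(k:ℝ)+2) * ((2*k+1).factorial : ℝ) := by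
      have h : 2*k+2 = (2*k+1) + 1 := by ring
      rw [h, Nat.factorial_succ]; push_cast; ring
    have hfac2 : ((k+1).factorial : ℝ) = ((k:ℝ)+1) * (k.factorial : ℝ) := by
      rw [Nat.factorial_succ]; push_cast; ring
    rw [hfac, hfac2, mul_pow b a, h2pow k]
    have hk : (k.factorial : ℝ) ≠ 0 := by positivity
    have hf1 : ((2*k+1).factorial : ℝ) ≠ 0 := by positivity
    have hk1 : (k:ℝ) + 1 ≠ 0 := by positivity
    have h22 : (2*(k:ℝ)+2) ≠ 0 := by positivity
    field_simp
  -- nonnegativity ⇒ norms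
  have habs : ∀ k, ∫ x in Set.Ioo (-a) a, ‖G k x‖ = ∫ x in Set.Ioo (-a) a, G k x := by
    intro k
    apply MeasureTheory.setIntegral_congr_fun measurableSet_Ioo
    intro x hx'
    have hx2 : x^2 < A := by rw [← ha2]; exact sq_lt_sq' hx'.1 hx'.2
    simp only [Real.norm_eq_abs, hGdef]
    rw [abs_of_nonneg]
    apply mul_nonneg (mul_nonneg hK.le (by positivity)) (pow_nonneg (by linarith) k)
  have hba : 0 < b * a := mul_pos hb ha
  have hnorm : Summable fun k => ∫ x in Set.Ioo (-a) a, ‖G k x‖ := by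
    have heq : (fun k => ∫ x in Set.Ioo (-a) a, ‖G k x‖)
        = fun k => K * (2 * (b*a)^(2*k+1) / ((2*k+2).factorial : ℝ)) :=
      funext fun k => (habs k).trans (hval k)
    rw [heq]
    exact (summable_aux (b*a) hba.le).mul_left K
  rw [← MeasureTheory.integral_tsum_of_summable_integral_norm hInt hnorm]
  rw [tsum_congr hval, tsum_mul_left, tsum_aux (b*a) hba]
  rw [hKdef, hbdef]
  have hπ : π ≠ 0 := Real.pi_ne_zero
  have hsinh' : Real.sinh (lam * t) ≠ 0 := hsinh.ne'
  field_simp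
end

section
/- Let λ, c > 0. Define p : ℝ² × (0,∞) → ℝ on the open cone {(x₁,x₂,t) : x₁² + x₂² < c²t², t > 0} by p(x₁,x₂,t) = (λ/(2πc)) · (1/sinh(λt)) · cosh((λ/c)√(c²t² − x₁² − x₂²)) / √(c²t² − x₁² − x₂²). Then p satisfies the two-dimensional telegraph-type equation with time-varying coefficient ∂²p/∂t² + 2λ coth(λt) ∂p/∂t − c² (∂²p/∂x₁² + ∂²p/∂x₂²) = 0 on the open cone. -/
open Real

noncomputable def GG (a w : ℝ) : ℝ := Real.cosh (a * Real.sqrt w) / Real.sqrt w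
noncomputable def GG₁ (a w : ℝ) : ℝ :=
  a * Real.sinh (a * Real.sqrt w) / (2 * w) - Real.cosh (a * Real.sqrt w) / (2 * w * Real.sqrt w)
noncomputable def GG₂ (a w : ℝ) : ℝ :=
  a ^ 2 * Real.cosh (a * Real.sqrt w) / (4 * w * Real.sqrt w)
    - 3 * a * Real.sinh (a * Real.sqrt w) / (4 * w ^ 2)
    + 3 * Real.cosh (a * Real.sqrt w) / (4 * w ^ 2 * Real.sqrt w)

lemma hGG (a : ℝ) {w : ℝ} (hw : 0 < w) : HasDerivAt (fun x => GG a x) (GG₁ a w) w := by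
  have hv0 : 0 < Real.sqrt w := Real.sqrt_pos.mpr hw
  have hs : HasDerivAt Real.sqrt (1 / (2 * Real.sqrt w)) w := Real.hasDerivAt_sqrt hw.ne'
  have h2 : HasDerivAt (fun x => Real.cosh (a * Real.sqrt x))
      (Real.sinh (a * Real.sqrt w) * (a * (1 / (2 * Real.sqrt w)))) w := (hs.const_mul a).cosh
  have h3 := h2.div hs hv0.ne'
  refine h3.congr_deriv ?_
  unfold GG₁
  set v := Real.sqrt w with hv
  rw [show w = v ^ 2 from (Real.sq_sqrt hw.le).symm]
  field_simp

lemma hGG₁ (a : ℝ) {w : ℝ} (hw : 0 < w) : HasDerivAt (fun x => GG₁ a x) (GG₂ a w) w := by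
  have hv0 : 0 < Real.sqrt w := Real.sqrt_pos.mpr hw
  have hs : HasDerivAt Real.sqrt (1 / (2 * Real.sqrt w)) w := Real.hasDerivAt_sqrt hw.ne'
  have hS : HasDerivAt (fun x => a * Real.sinh (a * Real.sqrt x))
      (a * (Real.cosh (a * Real.sqrt w) * (a * (1 / (2 * Real.sqrt w))))) w :=
    ((hs.const_mul a).sinh).const_mul a
  have hC : HasDerivAt (fun x => Real.cosh (a * Real.sqrt x))
      (Real.sinh (a * Real.sqrt w) * (a * (1 / (2 * Real.sqrt w)))) w := (hs.const_mul a).cosh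
  have hd1 : HasDerivAt (fun x : ℝ => 2 * x) 2 w := by
    simpa using (hasDerivAt_id w).const_mul 2
  have hd2 : HasDerivAt (fun x : ℝ => 2 * x * Real.sqrt x)
      (2 * Real.sqrt w + 2 * w * (1 / (2 * Real.sqrt w))) w := by
    exact hd1.mul hs
  have hw2 : (2 : ℝ) * w ≠ 0 := by positivity
  have hw3 : (2 : ℝ) * w * Real.sqrt w ≠ 0 := by positivity
  have h := (hS.div hd1 hw2).sub (hC.div hd2 hw3)
  refine h.congr_deriv ?_
  unfold GG₂
  set v := Real.sqrt w with hv
  rw [show w = v ^ 2 from (Real.sq_sqrt hw.le).symm]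
  field_simp
  ring

noncomputable def HH (K lam s : ℝ) : ℝ := K * (Real.sinh (lam * s))⁻¹
noncomputable def HH₁ (K lam s : ℝ) : ℝ :=
  -(K * lam * Real.cosh (lam * s)) / (Real.sinh (lam * s)) ^ 2
noncomputable def HH₂ (K lam s : ℝ) : ℝ :=
  -(K * lam ^ 2) * (Real.sinh (lam * s) ^ 2 - 2 * Real.cosh (lam * s) ^ 2)
    / (Real.sinh (lam * s)) ^ 3

lemma hHH (K lam : ℝ) {s : ℝ} (hs : Real.sinh (lam * s) ≠ 0) :
    HasDerivAt (fun x => HH K lam x) (HH₁ K lam s) s := by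
  have h1 : HasDerivAt (fun x => Real.sinh (lam * x)) (Real.cosh (lam * s) * lam) s := by
    simpa [mul_comm] using ((hasDerivAt_id s).const_mul lam).sinh
  have h2 := (h1.inv hs).const_mul K
  refine h2.congr_deriv ?_
  unfold HH₁
  field_simp

lemma hHH₁ (K lam : ℝ) {s : ℝ} (hs : Real.sinh (lam * s) ≠ 0) :
    HasDerivAt (fun x => HH₁ K lam x) (HH₂ K lam s) s := by
  have h1 : HasDerivAt (fun x => Real.sinh (lam * x)) (Real.cosh (lam * s) * lam) s := by
    simpa [mul_comm] using ((hasDerivAt_id s).const_mul lam).sinh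
  have hN : HasDerivAt (fun x => -(K * lam * Real.cosh (lam * x)))
      (-(K * lam * (Real.sinh (lam * s) * lam))) s := by
    refine ((((hasDerivAt_id s).const_mul lam).cosh).const_mul (K * lam)).neg.congr_deriv ?_; simp
  have hD : HasDerivAt (fun x => (Real.sinh (lam * x)) ^ 2)
      (2 * Real.sinh (lam * s) * (Real.cosh (lam * s) * lam)) s := by
    refine (h1.pow 2).congr_deriv ?_; norm_num
  have hD0 : (Real.sinh (lam * s)) ^ 2 ≠ 0 := pow_ne_zero _ hs
  have h := hN.div hD hD0
  refine h.congr_deriv ?_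
  unfold HH₂
  field_simp
  ring


/-- the projection onto the plane of the full law of `X₃(t)`,
`p(x₁,x₂,t) = (λ/(2πc)) (1/sinh λt) cosh((λ/c)√(c²t²-x₁²-x₂²))/√(c²t²-x₁²-x₂²)`,
satisfies the two-dimensional telegraph-type equation with time-varying coefficient
`∂²p/∂t² + 2λ coth(λt) ∂p/∂t - c²(∂²p/∂x₁² + ∂²p/∂x₂²) = 0` on the open cone
`{(x₁,x₂,t) : x₁² + x₂² < c²t², t > 0}`. -/
theorem statement14 (lam c : ℝ) (hlam : 0 < lam) (hc : 0 < c)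
    (p : ℝ → ℝ → ℝ → ℝ)
    (hp : ∀ x₁ x₂ t : ℝ, p x₁ x₂ t =
      lam / (2 * π * c) * (1 / Real.sinh (lam * t)) *
        Real.cosh (lam / c * Real.sqrt (c ^ 2 * t ^ 2 - x₁ ^ 2 - x₂ ^ 2)) /
        Real.sqrt (c ^ 2 * t ^ 2 - x₁ ^ 2 - x₂ ^ 2)) :
    ∀ x₁ x₂ t : ℝ, 0 < t → x₁ ^ 2 + x₂ ^ 2 < c ^ 2 * t ^ 2 →
      iteratedDeriv 2 (fun s => p x₁ x₂ s) t
        + 2 * lam * (Real.cosh (lam * t) / Real.sinh (lam * t)) *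
            deriv (fun s => p x₁ x₂ s) t
        - c ^ 2 * (iteratedDeriv 2 (fun s => p s x₂ t) x₁
            + iteratedDeriv 2 (fun s => p x₁ s t) x₂) = 0 := by
  intro x₁ x₂ t ht hcone
  set K : ℝ := lam / (2 * π * c) with hK
  set a : ℝ := lam / c with ha
  -- time direction
  have hpt : (fun s => p x₁ x₂ s)
      = fun s => HH K lam s * GG a (c ^ 2 * s ^ 2 - x₁ ^ 2 - x₂ ^ 2) := by
    funext s; rw [hp]; unfold HH GG; ring
  have hws : ∀ s : ℝ, HasDerivAt (fun x : ℝ => c ^ 2 * x ^ 2 - x₁ ^ 2 - x₂ ^ 2)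
      (2 * c ^ 2 * s) s := by
    intro s
    have h := (((hasDerivAt_pow 2 s).const_mul (c ^ 2)).sub_const (x₁ ^ 2)).sub_const (x₂ ^ 2)
    refine h.congr_deriv ?_; push_cast; ring
  have hF : ∀ s : ℝ, 0 < s → x₁ ^ 2 + x₂ ^ 2 < c ^ 2 * s ^ 2 →
      HasDerivAt (fun x => HH K lam x * GG a (c ^ 2 * x ^ 2 - x₁ ^ 2 - x₂ ^ 2))
        (HH₁ K lam s * GG a (c ^ 2 * s ^ 2 - x₁ ^ 2 - x₂ ^ 2)
          + HH K lam s * (GG₁ a (c ^ 2 * s ^ 2 - x₁ ^ 2 - x₂ ^ 2) * (2 * c ^ 2 * s))) s := by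
    intro s hs hsc
    have hwpos : 0 < c ^ 2 * s ^ 2 - x₁ ^ 2 - x₂ ^ 2 := by linarith
    have hsh : Real.sinh (lam * s) ≠ 0 := (Real.sinh_pos_iff.mpr (mul_pos hlam hs)).ne'
    exact (hHH K lam hsh).mul ((hGG a hwpos).comp (h₂ := fun x => GG a x) s (hws s))
  have hUopen : IsOpen {s : ℝ | 0 < s ∧ x₁ ^ 2 + x₂ ^ 2 < c ^ 2 * s ^ 2} := by
    have : {s : ℝ | 0 < s ∧ x₁ ^ 2 + x₂ ^ 2 < c ^ 2 * s ^ 2}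
        = {s : ℝ | 0 < s} ∩ {s : ℝ | x₁ ^ 2 + x₂ ^ 2 < c ^ 2 * s ^ 2} := rfl
    rw [this]
    exact (isOpen_lt continuous_const continuous_id).inter
      (isOpen_lt continuous_const (by fun_prop))
  have htU : t ∈ {s : ℝ | 0 < s ∧ x₁ ^ 2 + x₂ ^ 2 < c ^ 2 * s ^ 2} := ⟨ht, hcone⟩
  have hd1 : deriv (fun s => p x₁ x₂ s) t
      = HH₁ K lam t * GG a (c ^ 2 * t ^ 2 - x₁ ^ 2 - x₂ ^ 2)
        + HH K lam t * (GG₁ a (c ^ 2 * t ^ 2 - x₁ ^ 2 - x₂ ^ 2) * (2 * c ^ 2 * t)) := by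
    rw [hpt]; exact (hF t ht hcone).deriv
  have hev : deriv (fun s => p x₁ x₂ s) =ᶠ[nhds t]
      fun s => HH₁ K lam s * GG a (c ^ 2 * s ^ 2 - x₁ ^ 2 - x₂ ^ 2)
        + HH K lam s * (GG₁ a (c ^ 2 * s ^ 2 - x₁ ^ 2 - x₂ ^ 2) * (2 * c ^ 2 * s)) := by
    filter_upwards [hUopen.mem_nhds htU] with s hs
    rw [hpt]; exact (hF s hs.1 hs.2).deriv
  have hwt : 0 < c ^ 2 * t ^ 2 - x₁ ^ 2 - x₂ ^ 2 := by linarith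
  have hsht : Real.sinh (lam * t) ≠ 0 := (Real.sinh_pos_iff.mpr (mul_pos hlam ht)).ne'
  have hlin : HasDerivAt (fun x : ℝ => 2 * c ^ 2 * x) (2 * c ^ 2) t := by
    simpa using (hasDerivAt_id t).const_mul (2 * c ^ 2)
  have hF₁ : HasDerivAt (fun s => HH₁ K lam s * GG a (c ^ 2 * s ^ 2 - x₁ ^ 2 - x₂ ^ 2)
        + HH K lam s * (GG₁ a (c ^ 2 * s ^ 2 - x₁ ^ 2 - x₂ ^ 2) * (2 * c ^ 2 * s)))
      ((HH₂ K lam t * GG a (c ^ 2 * t ^ 2 - x₁ ^ 2 - x₂ ^ 2)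
          + HH₁ K lam t * (GG₁ a (c ^ 2 * t ^ 2 - x₁ ^ 2 - x₂ ^ 2) * (2 * c ^ 2 * t)))
        + (HH₁ K lam t * (GG₁ a (c ^ 2 * t ^ 2 - x₁ ^ 2 - x₂ ^ 2) * (2 * c ^ 2 * t))
          + HH K lam t * (GG₂ a (c ^ 2 * t ^ 2 - x₁ ^ 2 - x₂ ^ 2) * (2 * c ^ 2 * t) * (2 * c ^ 2 * t)
            + GG₁ a (c ^ 2 * t ^ 2 - x₁ ^ 2 - x₂ ^ 2) * (2 * c ^ 2)))) t := by
    exact ((hHH₁ K lam hsht).mul ((hGG a hwt).comp t (hws t))).add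
      ((hHH K lam hsht).mul (((hGG₁ a hwt).comp t (hws t)).mul hlin))
  have hd2 : iteratedDeriv 2 (fun s => p x₁ x₂ s) t
      = (HH₂ K lam t * GG a (c ^ 2 * t ^ 2 - x₁ ^ 2 - x₂ ^ 2)
          + HH₁ K lam t * (GG₁ a (c ^ 2 * t ^ 2 - x₁ ^ 2 - x₂ ^ 2) * (2 * c ^ 2 * t)))
        + (HH₁ K lam t * (GG₁ a (c ^ 2 * t ^ 2 - x₁ ^ 2 - x₂ ^ 2) * (2 * c ^ 2 * t))
          + HH K lam t * (GG₂ a (c ^ 2 * t ^ 2 - x₁ ^ 2 - x₂ ^ 2) * (2 * c ^ 2 * t) * (2 * c ^ 2 * t)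
            + GG₁ a (c ^ 2 * t ^ 2 - x₁ ^ 2 - x₂ ^ 2) * (2 * c ^ 2))) := by
    rw [show (2 : ℕ) = 1 + 1 from rfl, iteratedDeriv_succ, iteratedDeriv_one]
    rw [Filter.EventuallyEq.deriv_eq hev]
    exact hF₁.deriv

  -- spatial x₁
  have hpx1 : (fun y => p y x₂ t)
      = fun y => HH K lam t * GG a (c ^ 2 * t ^ 2 - y ^ 2 - x₂ ^ 2) := by
    funext y; rw [hp]; unfold HH GG; ring
  have hwx1 : ∀ y : ℝ, HasDerivAt (fun x : ℝ => c ^ 2 * t ^ 2 - x ^ 2 - x₂ ^ 2) (-(2 * y)) y := by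
    intro y
    have h := (HasDerivAt.const_sub (c ^ 2 * t ^ 2) (hasDerivAt_pow 2 y)).sub_const (x₂ ^ 2)
    refine h.congr_deriv ?_; push_cast; ring
  have hFx1 : ∀ y : ℝ, y ^ 2 + x₂ ^ 2 < c ^ 2 * t ^ 2 →
      HasDerivAt (fun x => HH K lam t * GG a (c ^ 2 * t ^ 2 - x ^ 2 - x₂ ^ 2))
        (HH K lam t * (GG₁ a (c ^ 2 * t ^ 2 - y ^ 2 - x₂ ^ 2) * (-(2 * y)))) y := by
    intro y hy
    have hwpos : 0 < c ^ 2 * t ^ 2 - y ^ 2 - x₂ ^ 2 := by linarith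
    exact ((hGG a hwpos).comp y (hwx1 y)).const_mul (HH K lam t)
  have hU1open : IsOpen {y : ℝ | y ^ 2 + x₂ ^ 2 < c ^ 2 * t ^ 2} :=
    isOpen_lt (by fun_prop) continuous_const
  have hev1 : deriv (fun y => p y x₂ t) =ᶠ[nhds x₁]
      fun y => HH K lam t * (GG₁ a (c ^ 2 * t ^ 2 - y ^ 2 - x₂ ^ 2) * (-(2 * y))) := by
    filter_upwards [hU1open.mem_nhds hcone] with y hy
    rw [hpx1]; exact (hFx1 y hy).deriv
  have hneg1 : HasDerivAt (fun x : ℝ => -(2 * x)) (-2) x₁ := by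
    refine ((hasDerivAt_id x₁).const_mul 2).neg.congr_deriv ?_; norm_num
  have hdx1 : iteratedDeriv 2 (fun s => p s x₂ t) x₁
      = HH K lam t * (GG₂ a (c ^ 2 * t ^ 2 - x₁ ^ 2 - x₂ ^ 2) * (-(2 * x₁)) * (-(2 * x₁))
          + GG₁ a (c ^ 2 * t ^ 2 - x₁ ^ 2 - x₂ ^ 2) * (-2)) := by
    rw [show (2 : ℕ) = 1 + 1 from rfl, iteratedDeriv_succ, iteratedDeriv_one]
    rw [Filter.EventuallyEq.deriv_eq hev1]
    exact ((((hGG₁ a hwt).comp x₁ (hwx1 x₁)).mul hneg1).const_mul (HH K lam t)).deriv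
  -- spatial x₂
  have hpx2 : (fun y => p x₁ y t)
      = fun y => HH K lam t * GG a (c ^ 2 * t ^ 2 - x₁ ^ 2 - y ^ 2) := by
    funext y; rw [hp]; unfold HH GG; ring
  have hwx2 : ∀ y : ℝ, HasDerivAt (fun x : ℝ => c ^ 2 * t ^ 2 - x₁ ^ 2 - x ^ 2) (-(2 * y)) y := by
    intro y
    have h := HasDerivAt.const_sub (c ^ 2 * t ^ 2 - x₁ ^ 2) (hasDerivAt_pow 2 y)
    refine h.congr_deriv ?_; push_cast; ring
  have hFx2 : ∀ y : ℝ, x₁ ^ 2 + y ^ 2 < c ^ 2 * t ^ 2 →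
      HasDerivAt (fun x => HH K lam t * GG a (c ^ 2 * t ^ 2 - x₁ ^ 2 - x ^ 2))
        (HH K lam t * (GG₁ a (c ^ 2 * t ^ 2 - x₁ ^ 2 - y ^ 2) * (-(2 * y)))) y := by
    intro y hy
    have hwpos : 0 < c ^ 2 * t ^ 2 - x₁ ^ 2 - y ^ 2 := by linarith
    exact ((hGG a hwpos).comp y (hwx2 y)).const_mul (HH K lam t)
  have hU2open : IsOpen {y : ℝ | x₁ ^ 2 + y ^ 2 < c ^ 2 * t ^ 2} :=
    isOpen_lt (by fun_prop) continuous_const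
  have hev2 : deriv (fun y => p x₁ y t) =ᶠ[nhds x₂]
      fun y => HH K lam t * (GG₁ a (c ^ 2 * t ^ 2 - x₁ ^ 2 - y ^ 2) * (-(2 * y))) := by
    filter_upwards [hU2open.mem_nhds hcone] with y hy
    rw [hpx2]; exact (hFx2 y hy).deriv
  have hneg2 : HasDerivAt (fun x : ℝ => -(2 * x)) (-2) x₂ := by
    refine ((hasDerivAt_id x₂).const_mul 2).neg.congr_deriv ?_; norm_num
  have hdx2 : iteratedDeriv 2 (fun s => p x₁ s t) x₂
      = HH K lam t * (GG₂ a (c ^ 2 * t ^ 2 - x₁ ^ 2 - x₂ ^ 2) * (-(2 * x₂)) * (-(2 * x₂))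
          + GG₁ a (c ^ 2 * t ^ 2 - x₁ ^ 2 - x₂ ^ 2) * (-2)) := by
    rw [show (2 : ℕ) = 1 + 1 from rfl, iteratedDeriv_succ, iteratedDeriv_one]
    rw [Filter.EventuallyEq.deriv_eq hev2]
    exact ((((hGG₁ a hwt).comp x₂ (hwx2 x₂)).mul hneg2).const_mul (HH K lam t)).deriv
  -- final algebra
  rw [hd1, hd2, hdx1, hdx2]
  set v := Real.sqrt (c ^ 2 * t ^ 2 - x₁ ^ 2 - x₂ ^ 2) with hvdef
  have hv0 : 0 < v := Real.sqrt_pos.mpr hwt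
  have hsh0 : 0 < Real.sinh (lam * t) := Real.sinh_pos_iff.mpr (mul_pos hlam ht)
  have hsum : x₁ ^ 2 + x₂ ^ 2 = c ^ 2 * t ^ 2 - v ^ 2 := by
    rw [hvdef, Real.sq_sqrt hwt.le]; ring
  have step : c ^ 2 * (HH K lam t * (GG₂ a (c ^ 2 * t ^ 2 - x₁ ^ 2 - x₂ ^ 2) * -(2 * x₁) * -(2 * x₁)
          + GG₁ a (c ^ 2 * t ^ 2 - x₁ ^ 2 - x₂ ^ 2) * -2)
        + HH K lam t * (GG₂ a (c ^ 2 * t ^ 2 - x₁ ^ 2 - x₂ ^ 2) * -(2 * x₂) * -(2 * x₂)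
          + GG₁ a (c ^ 2 * t ^ 2 - x₁ ^ 2 - x₂ ^ 2) * -2))
      = c ^ 2 * (HH K lam t * (GG₂ a (c ^ 2 * t ^ 2 - x₁ ^ 2 - x₂ ^ 2) * (4 * (c ^ 2 * t ^ 2 - v ^ 2))
          + GG₁ a (c ^ 2 * t ^ 2 - x₁ ^ 2 - x₂ ^ 2) * (-4))) := by
    linear_combination (4 * c ^ 2 * HH K lam t * GG₂ a (c ^ 2 * t ^ 2 - x₁ ^ 2 - x₂ ^ 2)) * hsum
  rw [step]
  unfold GG GG₁ GG₂ HH HH₁ HH₂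
  rw [show c ^ 2 * t ^ 2 - x₁ ^ 2 - x₂ ^ 2 = v ^ 2 from (Real.sq_sqrt hwt.le).symm]
  have hinv : c ^ 2 * c⁻¹ ^ 2 = 1 := by field_simp
  field_simp
  linear_combination (lam ^ 3 * π⁻¹ * c⁻¹ * Real.sinh (lam * t) ^ 2 * v ^ 4 *
    Real.cosh (a * Real.sqrt (v ^ 2)) * 4) * hinv
end

section
/- Let λ, c > 0. Define p : ℝ² × (0,∞) → ℝ on the open cone {(y₁,y₂,t) : y₁² + y₂² < c²t², t > 0} by p(y₁,y₂,t) = λ e^{(λ/c)√(c²t² − y₁² − y₂²)} / ( 2πc (e^{λt} − 1) √(c²t² − y₁² − y₂²) ). Then p satisfies the two-dimensional time-varying telegraph-type equation ∂²p/∂t² + c₁(t) ∂p/∂t − c² ( ∂²p/∂y₁² + ∂²p/∂y₂² ) − c₂(t) p = 0 on the open cone, where c₁(t) = 2λ e^{λt}/(e^{λt} − 1) and c₂(t) = −λ²/(e^{λt} − 1). -/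
open Real

noncomputable def psi (k a u : ℝ) : ℝ := k * Real.exp (a * Real.sqrt u) / Real.sqrt u

noncomputable def psi1 (k a u : ℝ) : ℝ :=
  k * Real.exp (a * Real.sqrt u) * (a * Real.sqrt u - 1) / (2 * Real.sqrt u ^ 3)

noncomputable def psi2 (k a u : ℝ) : ℝ :=
  k * Real.exp (a * Real.sqrt u) * (a ^ 2 * Real.sqrt u ^ 2 - 3 * a * Real.sqrt u + 3) /
    (4 * Real.sqrt u ^ 5)

lemma psi_hasDerivAt (k a : ℝ) {u : ℝ} (hu : 0 < u) :
    HasDerivAt (psi k a) (psi1 k a u) u := by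
  have hR : 0 < Real.sqrt u := Real.sqrt_pos.mpr hu
  have hRne : Real.sqrt u ≠ 0 := ne_of_gt hR
  have hs : HasDerivAt Real.sqrt (1 / (2 * Real.sqrt u)) u := Real.hasDerivAt_sqrt hu.ne'
  have he : HasDerivAt (fun v => Real.exp (a * Real.sqrt v))
      (Real.exp (a * Real.sqrt u) * (a * (1 / (2 * Real.sqrt u)))) u := (hs.const_mul a).exp
  have h : HasDerivAt (fun v => k * Real.exp (a * Real.sqrt v) / Real.sqrt v)
      ((k * (Real.exp (a * Real.sqrt u) * (a * (1 / (2 * Real.sqrt u)))) * Real.sqrt u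
        - k * Real.exp (a * Real.sqrt u) * (1 / (2 * Real.sqrt u))) / Real.sqrt u ^ 2) u :=
    (he.const_mul k).div hs hRne
  have heq : (k * (Real.exp (a * Real.sqrt u) * (a * (1 / (2 * Real.sqrt u)))) * Real.sqrt u
        - k * Real.exp (a * Real.sqrt u) * (1 / (2 * Real.sqrt u))) / Real.sqrt u ^ 2
      = psi1 k a u := by
    obtain ⟨r, hr, hru⟩ : ∃ r, 0 < r ∧ u = r ^ 2 :=
      ⟨Real.sqrt u, hR, (Real.sq_sqrt hu.le).symm⟩
    subst hru
    have hrne : r ≠ 0 := hr.ne'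
    simp only [psi1, Real.sqrt_sq hr.le]
    field_simp
  exact heq ▸ h

lemma psi1_hasDerivAt (k a : ℝ) {u : ℝ} (hu : 0 < u) :
    HasDerivAt (psi1 k a) (psi2 k a u) u := by
  have hR : 0 < Real.sqrt u := Real.sqrt_pos.mpr hu
  have hRne : Real.sqrt u ≠ 0 := ne_of_gt hR
  have hs : HasDerivAt Real.sqrt (1 / (2 * Real.sqrt u)) u := Real.hasDerivAt_sqrt hu.ne'
  have he : HasDerivAt (fun v => Real.exp (a * Real.sqrt v))
      (Real.exp (a * Real.sqrt u) * (a * (1 / (2 * Real.sqrt u)))) u := (hs.const_mul a).exp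
  have hnum : HasDerivAt (fun v => k * Real.exp (a * Real.sqrt v) * (a * Real.sqrt v - 1))
      (k * (Real.exp (a * Real.sqrt u) * (a * (1 / (2 * Real.sqrt u)))) * (a * Real.sqrt u - 1)
        + k * Real.exp (a * Real.sqrt u) * (a * (1 / (2 * Real.sqrt u)))) u :=
    (he.const_mul k).mul ((hs.const_mul a).sub_const 1)
  have hden : HasDerivAt (fun v => 2 * Real.sqrt v ^ 3)
      (2 * (((3 : ℕ) : ℝ) * Real.sqrt u ^ 2 * (1 / (2 * Real.sqrt u)))) u :=
    (hs.pow 3).const_mul 2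
  have hdne : 2 * Real.sqrt u ^ 3 ≠ 0 := by positivity
  have h := hnum.div hden hdne
  have heq : ((k * (Real.exp (a * Real.sqrt u) * (a * (1 / (2 * Real.sqrt u)))) * (a * Real.sqrt u - 1)
        + k * Real.exp (a * Real.sqrt u) * (a * (1 / (2 * Real.sqrt u)))) * (2 * Real.sqrt u ^ 3)
        - k * Real.exp (a * Real.sqrt u) * (a * Real.sqrt u - 1) *
            (2 * (((3 : ℕ) : ℝ) * Real.sqrt u ^ 2 * (1 / (2 * Real.sqrt u)))))
        / (2 * Real.sqrt u ^ 3) ^ 2 = psi2 k a u := by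
    obtain ⟨r, hr, hru⟩ : ∃ r, 0 < r ∧ u = r ^ 2 :=
      ⟨Real.sqrt u, hR, (Real.sq_sqrt hu.le).symm⟩
    subst hru
    have hrne : r ≠ 0 := hr.ne'
    simp only [psi2, Real.sqrt_sq hr.le]
    push_cast
    field_simp
    ring
  exact heq ▸ h

lemma iteratedDeriv_two' (f : ℝ → ℝ) : iteratedDeriv 2 f = deriv (deriv f) := by
  rw [show (2 : ℕ) = 1 + 1 from rfl, iteratedDeriv_succ, iteratedDeriv_one]

lemma aux_space (k a B : ℝ) {b y : ℝ} (hy : 0 < b - y ^ 2) :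
    iteratedDeriv 2 (fun s => psi k a (b - s ^ 2) / B) y
      = (psi2 k a (b - y ^ 2) * (-(2 * y)) * (-(2 * y)) + psi1 k a (b - y ^ 2) * (-2)) / B := by
  have hder : ∀ s : ℝ, 0 < b - s ^ 2 →
      HasDerivAt (fun s' => psi k a (b - s' ^ 2) / B) (psi1 k a (b - s ^ 2) * (-(2 * s)) / B) s := by
    intro s hs
    have hinner : HasDerivAt (fun x : ℝ => b - x ^ 2) (-(2 * s)) s := by
      simpa using (hasDerivAt_pow 2 s).const_sub b
    exact (HasDerivAt.comp s (psi_hasDerivAt k a hs) hinner).div_const B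
  have hcont : ContinuousAt (fun s : ℝ => b - s ^ 2) y := by fun_prop
  have hev : ∀ᶠ s in nhds y, 0 < b - s ^ 2 := hcont.eventually (eventually_gt_nhds hy)
  have hev2 : deriv (fun s => psi k a (b - s ^ 2) / B)
      =ᶠ[nhds y] (fun s => psi1 k a (b - s ^ 2) * (-(2 * s)) / B) := by
    filter_upwards [hev] with s hs
    exact (hder s hs).deriv
  rw [iteratedDeriv_two', Filter.EventuallyEq.deriv_eq hev2]
  have hinner : HasDerivAt (fun x : ℝ => b - x ^ 2) (-(2 * y)) y := by
    simpa using (hasDerivAt_pow 2 y).const_sub b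
  have hA : HasDerivAt (fun s => psi1 k a (b - s ^ 2)) (psi2 k a (b - y ^ 2) * (-(2 * y))) y :=
    HasDerivAt.comp y (psi1_hasDerivAt k a hy) hinner
  have hB2 : HasDerivAt (fun s : ℝ => -(2 * s)) (-2) y := by
    simpa using ((hasDerivAt_id y).const_mul (2 : ℝ)).fun_neg
  exact ((hA.mul hB2).div_const B).deriv

noncomputable def tder (lam c y₁ y₂ s : ℝ) : ℝ :=
  (psi1 lam (lam / c) (c ^ 2 * s ^ 2 - y₁ ^ 2 - y₂ ^ 2) * (c ^ 2 * (2 * s)) *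
      (2 * π * c * (Real.exp (lam * s) - 1))
    - psi lam (lam / c) (c ^ 2 * s ^ 2 - y₁ ^ 2 - y₂ ^ 2) * (2 * π * c * (Real.exp (lam * s) * lam)))
  / (2 * π * c * (Real.exp (lam * s) - 1)) ^ 2

noncomputable def tder2 (lam c y₁ y₂ s : ℝ) : ℝ :=
  (((psi2 lam (lam / c) (c ^ 2 * s ^ 2 - y₁ ^ 2 - y₂ ^ 2) * (c ^ 2 * (2 * s)) * (c ^ 2 * (2 * s))
      + psi1 lam (lam / c) (c ^ 2 * s ^ 2 - y₁ ^ 2 - y₂ ^ 2) * (c ^ 2 * 2)) *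
        (2 * π * c * (Real.exp (lam * s) - 1))
      + psi1 lam (lam / c) (c ^ 2 * s ^ 2 - y₁ ^ 2 - y₂ ^ 2) * (c ^ 2 * (2 * s)) *
        (2 * π * c * (Real.exp (lam * s) * lam))
    - (psi1 lam (lam / c) (c ^ 2 * s ^ 2 - y₁ ^ 2 - y₂ ^ 2) * (c ^ 2 * (2 * s)) *
        (2 * π * c * (Real.exp (lam * s) * lam))
      + psi lam (lam / c) (c ^ 2 * s ^ 2 - y₁ ^ 2 - y₂ ^ 2) *
        (2 * π * c * (Real.exp (lam * s) * lam * lam)))) *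
      ((2 * π * c * (Real.exp (lam * s) - 1)) ^ 2)
    - (psi1 lam (lam / c) (c ^ 2 * s ^ 2 - y₁ ^ 2 - y₂ ^ 2) * (c ^ 2 * (2 * s)) *
        (2 * π * c * (Real.exp (lam * s) - 1))
      - psi lam (lam / c) (c ^ 2 * s ^ 2 - y₁ ^ 2 - y₂ ^ 2) *
        (2 * π * c * (Real.exp (lam * s) * lam))) *
      (2 * (2 * π * c * (Real.exp (lam * s) - 1)) * (2 * π * c * (Real.exp (lam * s) * lam))))
  / ((2 * π * c * (Real.exp (lam * s) - 1)) ^ 2) ^ 2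

lemma time_hasDerivAt (lam c y₁ y₂ : ℝ) (hlam : 0 < lam) (hc : 0 < c) {s : ℝ}
    (hs : 0 < s) (hu : 0 < c ^ 2 * s ^ 2 - y₁ ^ 2 - y₂ ^ 2) :
    HasDerivAt (fun s' => psi lam (lam / c) (c ^ 2 * s' ^ 2 - y₁ ^ 2 - y₂ ^ 2) /
        (2 * π * c * (Real.exp (lam * s') - 1))) (tder lam c y₁ y₂ s) s := by
  have hπ := Real.pi_pos
  have hinner : HasDerivAt (fun s' : ℝ => c ^ 2 * s' ^ 2 - y₁ ^ 2 - y₂ ^ 2) (c ^ 2 * (2 * s)) s := by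
    simpa using (((hasDerivAt_pow 2 s).const_mul (c ^ 2)).sub_const (y₁ ^ 2)).sub_const (y₂ ^ 2)
  have hD : HasDerivAt (fun s' => psi lam (lam / c) (c ^ 2 * s' ^ 2 - y₁ ^ 2 - y₂ ^ 2))
      (psi1 lam (lam / c) (c ^ 2 * s ^ 2 - y₁ ^ 2 - y₂ ^ 2) * (c ^ 2 * (2 * s))) s :=
    HasDerivAt.comp s (psi_hasDerivAt lam (lam / c) hu) hinner
  have hC : HasDerivAt (fun s' : ℝ => 2 * π * c * (Real.exp (lam * s') - 1))
      (2 * π * c * (Real.exp (lam * s) * lam)) s := by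
    simpa using ((((hasDerivAt_id s).const_mul lam).exp).sub_const 1).const_mul (2 * π * c)
  have hE1 : 1 < Real.exp (lam * s) := by
    nlinarith [Real.add_one_le_exp (lam * s), mul_pos hlam hs]
  have hCne : 2 * π * c * (Real.exp (lam * s) - 1) ≠ 0 :=
    ne_of_gt (mul_pos (by positivity) (by linarith))
  simp only [tder]
  exact hD.div hC hCne

lemma time2_hasDerivAt (lam c y₁ y₂ : ℝ) (hlam : 0 < lam) (hc : 0 < c) {s : ℝ}
    (hs : 0 < s) (hu : 0 < c ^ 2 * s ^ 2 - y₁ ^ 2 - y₂ ^ 2) :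
    HasDerivAt (fun s' => tder lam c y₁ y₂ s') (tder2 lam c y₁ y₂ s) s := by
  have hπ := Real.pi_pos
  have hinner : HasDerivAt (fun s' : ℝ => c ^ 2 * s' ^ 2 - y₁ ^ 2 - y₂ ^ 2) (c ^ 2 * (2 * s)) s := by
    simpa using (((hasDerivAt_pow 2 s).const_mul (c ^ 2)).sub_const (y₁ ^ 2)).sub_const (y₂ ^ 2)
  have hA : HasDerivAt (fun s' => psi1 lam (lam / c) (c ^ 2 * s' ^ 2 - y₁ ^ 2 - y₂ ^ 2))
      (psi2 lam (lam / c) (c ^ 2 * s ^ 2 - y₁ ^ 2 - y₂ ^ 2) * (c ^ 2 * (2 * s))) s :=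
    HasDerivAt.comp s (psi1_hasDerivAt lam (lam / c) hu) hinner
  have hD : HasDerivAt (fun s' => psi lam (lam / c) (c ^ 2 * s' ^ 2 - y₁ ^ 2 - y₂ ^ 2))
      (psi1 lam (lam / c) (c ^ 2 * s ^ 2 - y₁ ^ 2 - y₂ ^ 2) * (c ^ 2 * (2 * s))) s :=
    HasDerivAt.comp s (psi_hasDerivAt lam (lam / c) hu) hinner
  have hB : HasDerivAt (fun s' : ℝ => c ^ 2 * (2 * s')) (c ^ 2 * 2) s := by
    simpa using ((hasDerivAt_id s).const_mul (2 : ℝ)).const_mul (c ^ 2)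
  have hC : HasDerivAt (fun s' : ℝ => 2 * π * c * (Real.exp (lam * s') - 1))
      (2 * π * c * (Real.exp (lam * s) * lam)) s := by
    simpa using ((((hasDerivAt_id s).const_mul lam).exp).sub_const 1).const_mul (2 * π * c)
  have hEx : HasDerivAt (fun s' : ℝ => 2 * π * c * (Real.exp (lam * s') * lam))
      (2 * π * c * (Real.exp (lam * s) * lam * lam)) s := by
    simpa using ((((hasDerivAt_id s).const_mul lam).exp).mul_const lam).const_mul (2 * π * c)
  have hE1 : 1 < Real.exp (lam * s) := by
    nlinarith [Real.add_one_le_exp (lam * s), mul_pos hlam hs]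
  have hCne : 2 * π * c * (Real.exp (lam * s) - 1) ≠ 0 :=
    ne_of_gt (mul_pos (by positivity) (by linarith))
  have hC2 : HasDerivAt (fun s' : ℝ => (2 * π * c * (Real.exp (lam * s') - 1)) ^ 2)
      (2 * (2 * π * c * (Real.exp (lam * s) - 1)) * (2 * π * c * (Real.exp (lam * s) * lam))) s := by
    simpa using hC.fun_pow 2
  have hC2ne : (2 * π * c * (Real.exp (lam * s) - 1)) ^ 2 ≠ 0 := pow_ne_zero 2 hCne
  simp only [tder, tder2]
  exact (((hA.mul hB).mul hC).sub (hD.mul hEx)).div hC2 hC2ne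

/-- the law of the projection `(Y₁(t), Y₂(t))` onto the plane of
the three-dimensional random flight `Y₃(t)`,
`p(y₁,y₂,t) = λ e^{(λ/c)√(c²t²-y₁²-y₂²)} / (2πc(e^{λt}-1)√(c²t²-y₁²-y₂²))`,
satisfies the two-dimensional time-varying telegraph-type equation
`∂²p/∂t² + c₁(t) ∂p/∂t - c²(∂²p/∂y₁² + ∂²p/∂y₂²) - c₂(t) p = 0` on the open cone
`{(y₁,y₂,t) : y₁² + y₂² < c²t², t > 0}`, where `c₁(t) = 2λe^{λt}/(e^{λt}-1)` and
`c₂(t) = -λ²/(e^{λt}-1)`. -/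
theorem statement18 (lam c : ℝ) (hlam : 0 < lam) (hc : 0 < c)
    (p : ℝ → ℝ → ℝ → ℝ)
    (hp : ∀ y₁ y₂ t : ℝ, p y₁ y₂ t =
      lam * Real.exp (lam / c * Real.sqrt (c ^ 2 * t ^ 2 - y₁ ^ 2 - y₂ ^ 2)) /
        (2 * π * c * (Real.exp (lam * t) - 1) *
          Real.sqrt (c ^ 2 * t ^ 2 - y₁ ^ 2 - y₂ ^ 2))) :
    ∀ y₁ y₂ t : ℝ, 0 < t → y₁ ^ 2 + y₂ ^ 2 < c ^ 2 * t ^ 2 →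
      iteratedDeriv 2 (fun s => p y₁ y₂ s) t
        + (2 * lam * Real.exp (lam * t) / (Real.exp (lam * t) - 1)) *
            deriv (fun s => p y₁ y₂ s) t
        - c ^ 2 * (iteratedDeriv 2 (fun s => p s y₂ t) y₁
            + iteratedDeriv 2 (fun s => p y₁ s t) y₂)
        - (-(lam ^ 2) / (Real.exp (lam * t) - 1)) * p y₁ y₂ t = 0 := by
  intro y₁ y₂ t ht hcone
  have hπ := Real.pi_pos
  have hu : 0 < c ^ 2 * t ^ 2 - y₁ ^ 2 - y₂ ^ 2 := by linarith
  have hE1 : 1 < Real.exp (lam * t) := by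
    nlinarith [Real.add_one_le_exp (lam * t), mul_pos hlam ht]
  have hEne : Real.exp (lam * t) - 1 ≠ 0 := ne_of_gt (by linarith)
  have hfy₁ : (fun s => p s y₂ t) = (fun s => psi lam (lam / c) (c ^ 2 * t ^ 2 - y₂ ^ 2 - s ^ 2) /
      (2 * π * c * (Real.exp (lam * t) - 1))) := by
    funext s
    rw [hp, show c ^ 2 * t ^ 2 - s ^ 2 - y₂ ^ 2 = c ^ 2 * t ^ 2 - y₂ ^ 2 - s ^ 2 from by ring,
      mul_comm (2 * π * c * (Real.exp (lam * t) - 1))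
        (Real.sqrt (c ^ 2 * t ^ 2 - y₂ ^ 2 - s ^ 2)), ← div_div]
    rfl
  have hfy₂ : (fun s => p y₁ s t) = (fun s => psi lam (lam / c) (c ^ 2 * t ^ 2 - y₁ ^ 2 - s ^ 2) /
      (2 * π * c * (Real.exp (lam * t) - 1))) := by
    funext s
    rw [hp, mul_comm (2 * π * c * (Real.exp (lam * t) - 1))
        (Real.sqrt (c ^ 2 * t ^ 2 - y₁ ^ 2 - s ^ 2)), ← div_div]
    rfl
  have hft : (fun s => p y₁ y₂ s) = (fun s' => psi lam (lam / c) (c ^ 2 * s' ^ 2 - y₁ ^ 2 - y₂ ^ 2) /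
      (2 * π * c * (Real.exp (lam * s') - 1))) := by
    funext s
    rw [hp, mul_comm (2 * π * c * (Real.exp (lam * s) - 1))
        (Real.sqrt (c ^ 2 * s ^ 2 - y₁ ^ 2 - y₂ ^ 2)), ← div_div]
    rfl
  rw [hfy₁, hfy₂, hft, hp y₁ y₂ t]
  rw [aux_space lam (lam / c) (2 * π * c * (Real.exp (lam * t) - 1))
        (show (0:ℝ) < c ^ 2 * t ^ 2 - y₂ ^ 2 - y₁ ^ 2 from by linarith),
      aux_space lam (lam / c) (2 * π * c * (Real.exp (lam * t) - 1))
        (show (0:ℝ) < c ^ 2 * t ^ 2 - y₁ ^ 2 - y₂ ^ 2 from by linarith)]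
  rw [(time_hasDerivAt lam c y₁ y₂ hlam hc ht hu).deriv]
  have hcont : ContinuousAt (fun s : ℝ => c ^ 2 * s ^ 2 - y₁ ^ 2 - y₂ ^ 2) t := by fun_prop
  have hevu : ∀ᶠ s in nhds t, 0 < c ^ 2 * s ^ 2 - y₁ ^ 2 - y₂ ^ 2 :=
    hcont.eventually (eventually_gt_nhds hu)
  have hevpos : ∀ᶠ s in nhds t, 0 < s := eventually_gt_nhds ht
  have hder1 : deriv (fun s' => psi lam (lam / c) (c ^ 2 * s' ^ 2 - y₁ ^ 2 - y₂ ^ 2) /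
      (2 * π * c * (Real.exp (lam * s') - 1))) =ᶠ[nhds t] (fun s => tder lam c y₁ y₂ s) := by
    filter_upwards [hevpos, hevu] with s hs hus
    exact (time_hasDerivAt lam c y₁ y₂ hlam hc hs hus).deriv
  rw [iteratedDeriv_two', Filter.EventuallyEq.deriv_eq hder1,
    (time2_hasDerivAt lam c y₁ y₂ hlam hc ht hu).deriv]
  rw [show c ^ 2 * t ^ 2 - y₂ ^ 2 - y₁ ^ 2 = c ^ 2 * t ^ 2 - y₁ ^ 2 - y₂ ^ 2 from by ring]
  simp only [tder, tder2, psi, psi1, psi2]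
  have hR0 : 0 < Real.sqrt (c ^ 2 * t ^ 2 - y₁ ^ 2 - y₂ ^ 2) := Real.sqrt_pos.mpr hu
  set R := Real.sqrt (c ^ 2 * t ^ 2 - y₁ ^ 2 - y₂ ^ 2) with hRdef
  have hR2 : R ^ 2 = c ^ 2 * t ^ 2 - y₁ ^ 2 - y₂ ^ 2 := Real.sq_sqrt hu.le
  have hRne : R ≠ 0 := ne_of_gt hR0
  have hcne : c ≠ 0 := ne_of_gt hc
  have hπne : π ≠ 0 := ne_of_gt hπ
  have h0 : (c ^ 2 * lam * Real.exp (lam / c * R) *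
      ((lam / c) ^ 2 * R ^ 2 - 3 * (lam / c) * R + 3) /
        (R ^ 5 * (2 * π * c * (Real.exp (lam * t) - 1)))) *
      ((c ^ 2 * t ^ 2 - y₁ ^ 2 - y₂ ^ 2) - R ^ 2) = 0 := by
    rw [hR2]; ring
  conv_rhs => rw [← h0]
  field_simp
  ring
end

section
/- Let λ, c > 0, t > 0, and let y₁ ∈ ℝ satisfy |y₁| < ct. Set b = √(c²t² − y₁²). Then ∫_{−b}^{b} λ e^{(λ/c)√(c²t² − y₁² − y₂²)} / ( 2πc (e^{λt} − 1) √(c²t² − y₁² − y₂²) ) dy₂ = (λ / (2c(e^{λt} − 1))) · Σ_{k=0}^∞ ( (λ/(2c)) √(c²t² − y₁²) )^k / ( Γ(k/2 + 1) )². -/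
open Real MeasureTheory intervalIntegral


lemma gamma_dup (k : ℕ) :
    Real.Gamma (((k:ℝ)+1)/2) * Real.Gamma ((k:ℝ)/2 + 1)
      = Real.sqrt π * k.factorial / 2 ^ k := by
  have h := Real.Gamma_mul_Gamma_add_half (((k:ℝ)+1)/2)
  have h1 : ((k:ℝ)+1)/2 + 1/2 = (k:ℝ)/2 + 1 := by ring
  have h2 : 2 * (((k:ℝ)+1)/2) = (k:ℝ) + 1 := by ring
  rw [h1, h2, Real.Gamma_nat_eq_factorial] at h
  rw [h]
  have h3 : (1 - ((k:ℝ) + 1)) = -(k:ℝ) := by ring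
  rw [h3, Real.rpow_neg (by norm_num), Real.rpow_natCast]
  have : (0:ℝ) < 2 ^ k := by positivity
  field_simp

lemma gamma_P (m : ℕ) : Real.Gamma ((m:ℝ) + 1/2) ≤ Real.sqrt π * Real.Gamma ((m:ℝ) + 1) := by
  induction m with
  | zero =>
      norm_num [Real.Gamma_one, Real.Gamma_one_half_eq]
  | succ n ih =>
      push_cast
      have hpos : (0:ℝ) < (n:ℝ) + 1/2 := by positivity
      have h1 : ((n:ℝ)+1) + 1/2 = ((n:ℝ) + 1/2) + 1 := by ring
      rw [h1, show ((n:ℝ)+1) + 1 = ((n:ℝ) + 1) + 1 from rfl, Real.Gamma_add_one hpos.ne',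
        Real.Gamma_add_one (by positivity : ((n:ℝ)+1) ≠ 0)]
      have hG : 0 < Real.Gamma ((n:ℝ) + 1) := Real.Gamma_pos_of_pos (by positivity)
      nlinarith [Real.sqrt_nonneg π, Real.Gamma_pos_of_pos hpos]

lemma gamma_Q (m : ℕ) : Real.Gamma ((m:ℝ) + 1) ≤ Real.sqrt π * Real.Gamma ((m:ℝ) + 3/2) := by
  induction m with
  | zero =>
      norm_num [Real.Gamma_one]
      rw [show ((3:ℝ)/2) = 1/2 + 1 by norm_num, Real.Gamma_add_one (by norm_num),
        Real.Gamma_one_half_eq]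
      nlinarith [Real.sq_sqrt (le_of_lt Real.pi_pos), Real.pi_gt_three, Real.sqrt_nonneg π]
  | succ n ih =>
      push_cast
      have hpos : (0:ℝ) < (n:ℝ) + 3/2 := by positivity
      have h2 : ((n:ℝ)+1) + 3/2 = ((n:ℝ) + 3/2) + 1 := by ring
      rw [h2, show ((n:ℝ)+1) + 1 = ((n:ℝ) + 1) + 1 from rfl, Real.Gamma_add_one hpos.ne',
        Real.Gamma_add_one (by positivity : ((n:ℝ)+1) ≠ 0)]
      have hG : 0 < Real.Gamma ((n:ℝ) + 3/2) := Real.Gamma_pos_of_pos hpos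
      nlinarith [Real.sqrt_nonneg π, Real.Gamma_pos_of_pos (show (0:ℝ) < (n:ℝ)+1 by positivity)]

lemma gamma_ratio (k : ℕ) :
    Real.Gamma (((k:ℝ)+1)/2) ≤ Real.sqrt π * Real.Gamma ((k:ℝ)/2 + 1) := by
  rcases Nat.even_or_odd k with ⟨m, hm⟩ | ⟨m, hm⟩
  · subst hm
    have e1 : (((m + m : ℕ):ℝ)+1)/2 = (m:ℝ) + 1/2 := by push_cast; ring
    have e2 : ((m + m : ℕ):ℝ)/2 + 1 = (m:ℝ) + 1 := by push_cast; ring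
    rw [e1, e2]; exact gamma_P m
  · subst hm
    have e1 : (((2*m + 1 : ℕ):ℝ)+1)/2 = (m:ℝ) + 1 := by push_cast; ring
    have e2 : ((2*m + 1 : ℕ):ℝ)/2 + 1 = (m:ℝ) + 3/2 := by push_cast; ring
    rw [e1, e2]; exact gamma_Q m


lemma beta_integrable {p : ℝ} (hp : -1 < p) :
    IntervalIntegrable (fun x : ℝ => x ^ p * (1-x) ^ p) volume 0 1 := by
  have h1 : IntervalIntegrable (fun x : ℝ => x ^ p * (1-x) ^ p) volume 0 (1/2) := by
    apply (intervalIntegrable_rpow' hp (a := 0) (b := 1/2)).mul_continuousOn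
    apply ContinuousOn.rpow_const
    · exact (continuous_const.sub continuous_id).continuousOn
    · intro x hx
      left
      rw [Set.uIcc_of_le (by norm_num)] at hx
      have := hx.2
      intro h
      simp only [sub_eq_zero] at h
      nlinarith [hx.2]
  have h2 : IntervalIntegrable (fun x : ℝ => x ^ p * (1-x) ^ p) volume (1/2) 1 := by
    have h3 := h1.comp_sub_left 1
    simp only [sub_sub_cancel] at h3
    have : (fun x : ℝ => (1-x) ^ p * x ^ p) = (fun x : ℝ => x ^ p * (1-x) ^ p) := by
      funext x; ring
    rw [this] at h3
    norm_num at h3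
    exact h3.symm
  exact h1.trans h2

lemma beta_val {p : ℝ} (hp : -1 < p) :
    ∫ x in (0:ℝ)..1, x ^ p * (1-x) ^ p
      = Real.Gamma (p+1)^2 / Real.Gamma (2*p+2) := by
  have hp1 : (0:ℝ) < p + 1 := by linarith
  have key := Complex.Gamma_mul_Gamma_eq_betaIntegral
    (s := ((p+1 : ℝ) : ℂ)) (t := ((p+1 : ℝ) : ℂ)) (by simpa using hp1) (by simpa using hp1)
  rw [Complex.betaIntegral] at key
  have hcongr : (∫ x : ℝ in (0:ℝ)..1,
        (x : ℂ) ^ (((p+1:ℝ):ℂ) - 1) * (1 - (x:ℂ)) ^ (((p+1:ℝ):ℂ) - 1))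
      = ((∫ x in (0:ℝ)..1, x ^ p * (1-x) ^ p : ℝ) : ℂ) := by
    rw [show ((∫ x in (0:ℝ)..1, x ^ p * (1-x) ^ p : ℝ) : ℂ)
        = ∫ x in (0:ℝ)..1, ((x ^ p * (1-x) ^ p : ℝ) : ℂ)
      from (RCLike.intervalIntegral_ofReal (𝕜 := ℂ)).symm]
    apply intervalIntegral.integral_congr
    intro x hx
    rw [Set.uIcc_of_le (by norm_num)] at hx
    have hx0 : (0:ℝ) ≤ x := hx.1
    have hx1 : (0:ℝ) ≤ 1 - x := by linarith [hx.2]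
    have e : (((p+1:ℝ):ℂ) - 1) = ((p:ℝ):ℂ) := by push_cast; ring
    show (x : ℂ) ^ (((p+1:ℝ):ℂ) - 1) * (1 - (x:ℂ)) ^ (((p+1:ℝ):ℂ) - 1)
        = ((x ^ p * (1-x) ^ p : ℝ) : ℂ)
    rw [e]
    push_cast [Complex.ofReal_cpow hx0, Complex.ofReal_cpow hx1]
    ring
  rw [hcongr, ← Complex.ofReal_add, Complex.Gamma_ofReal, Complex.Gamma_ofReal] at key
  have key2 : Real.Gamma (p+1) * Real.Gamma (p+1)
      = Real.Gamma ((p+1)+(p+1)) * ∫ x in (0:ℝ)..1, x ^ p * (1-x) ^ p := by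
    exact_mod_cast key
  have e2 : (p + 1) + (p + 1) = 2*p+2 := by ring
  rw [e2] at key2
  have hG : Real.Gamma (2*p+2) ≠ 0 := (Real.Gamma_pos_of_pos (by linarith)).ne'
  field_simp
  rw [sq]
  rw [show (p + 1) * 2 = 2 * p + 2 by ring]
  linarith [key2]



lemma key_eq {b y p : ℝ} (hb : 0 < b) (h1 : -b ≤ y) (h2 : y ≤ b) :
    (b^2 - y^2) ^ p
      = (2*b) ^ (2*p) * (((2*b)⁻¹ * (y+b)) ^ p * (1 - (2*b)⁻¹ * (y+b)) ^ p) := by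
  set u := (2*b)⁻¹ * (y+b) with hu
  have hb2 : (0:ℝ) < 2*b := by linarith
  have hu0 : 0 ≤ u := by
    apply mul_nonneg (le_of_lt (inv_pos.mpr hb2)); linarith
  have hu1 : u ≤ 1 := by
    rw [hu, inv_mul_le_iff₀ hb2]; linarith
  have e1 : y + b = 2*b*u := by rw [hu]; field_simp
  have e2 : b - y = 2*b*(1-u) := by rw [hu]; field_simp; ring
  have e3 : b^2 - y^2 = (2*b*u) * (2*b*(1-u)) := by nlinarith [e1, e2]
  rw [e3, Real.mul_rpow (mul_nonneg hb2.le hu0) (mul_nonneg hb2.le (by linarith)),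
    Real.mul_rpow hb2.le hu0, Real.mul_rpow hb2.le (by linarith),
    show (2:ℝ)*p = p + p by ring, Real.rpow_add hb2]
  ring

lemma J_integrable {b p : ℝ} (hb : 0 < b) (hp : -1 < p) :
    IntervalIntegrable (fun y : ℝ => (b^2 - y^2) ^ p) volume (-b) b := by
  have hb2 : (0:ℝ) < 2*b := by linarith
  have h1 := (beta_integrable hp).comp_mul_left (c := (2*b)⁻¹)
  have h2 := h1.comp_add_right b
  -- h2 endpoints: 0/(2b)⁻¹ - b .. 1/(2b)⁻¹ - b = -b .. b
  have e0 : (0:ℝ) / (2*b)⁻¹ - b = -b := by simp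
  have e1 : (1:ℝ) / (2*b)⁻¹ - b = b := by field_simp; ring
  rw [e0, e1] at h2
  have h3 := h2.const_mul ((2*b) ^ (2*p))
  rw [intervalIntegrable_iff_integrableOn_Ioc_of_le (by linarith : -b ≤ b)] at h3 ⊢
  apply h3.congr_fun ?_ measurableSet_Ioc
  intro y hy
  exact (key_eq hb hy.1.le hy.2).symm

lemma J_val {b p : ℝ} (hb : 0 < b) (hp : -1 < p) :
    (∫ y in (-b)..b, (b^2 - y^2) ^ p)
      = (2*b) ^ (2*p+1) * (Real.Gamma (p+1)^2 / Real.Gamma (2*p+2)) := by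
  have hb2 : (0:ℝ) < 2*b := by linarith
  have comp := intervalIntegral.integral_comp_mul_add
    (f := fun y : ℝ => (b^2 - y^2) ^ p) (a := 0) (b := 1) (c := 2*b) hb2.ne' (-b)
  have e0 : 2*b*0 + -b = -b := by ring
  have e1 : 2*b*1 + -b = b := by ring
  rw [e0, e1, smul_eq_mul] at comp
  have congr1 : (∫ x in (0:ℝ)..1, (b^2 - (2*b*x + -b)^2) ^ p)
      = ∫ x in (0:ℝ)..1, (2*b) ^ (2*p) * (x ^ p * (1-x) ^ p) := by
    apply intervalIntegral.integral_congr
    intro x hx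
    rw [Set.uIcc_of_le (by norm_num)] at hx
    have hy1 : -b ≤ 2*b*x + -b := by nlinarith [hx.1]
    have hy2 : 2*b*x + -b ≤ b := by nlinarith [hx.2]
    have eu : (2*b)⁻¹ * ((2*b*x + -b) + b) = x := by field_simp; ring
    show (b^2 - (2*b*x + -b)^2) ^ p = (2*b) ^ (2*p) * (x ^ p * (1-x) ^ p)
    rw [key_eq hb hy1 hy2 (p := p), eu]
  rw [congr1, intervalIntegral.integral_const_mul, beta_val hp] at comp
  have hI : (2*b) * ((2*b) ^ (2*p) * (Real.Gamma (p+1)^2 / Real.Gamma (2*p+2)))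
      = ∫ y in (-b)..b, (b^2 - y^2) ^ p := by
    rw [comp]; field_simp
  rw [← hI, Real.rpow_add hb2, Real.rpow_one]
  ring



lemma core {a b : ℝ} (ha : 0 < a) (hb : 0 < b) :
    (∫ y in (-b)..b, Real.exp (a * Real.sqrt (b^2 - y^2)) / Real.sqrt (b^2 - y^2))
      = π * ∑' k : ℕ, (a*b/2)^k / Real.Gamma ((k:ℝ)/2+1)^2 := by
  have hbb : -b ≤ b := by linarith
  set F : ℕ → ℝ → ℝ :=
    fun k y => a^k / k.factorial * (b^2 - y^2) ^ (((k:ℝ)-1)/2) with hF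
  have hpk : ∀ k : ℕ, -1 < ((k:ℝ)-1)/2 := by
    intro k; have : (0:ℝ) ≤ k := Nat.cast_nonneg k; linarith
  have hGpos : ∀ k : ℕ, 0 < Real.Gamma ((k:ℝ)/2+1) := by
    intro k
    apply Real.Gamma_pos_of_pos
    have : (0:ℝ) ≤ k := Nat.cast_nonneg k; linarith
  -- value of each integral
  have Jk : ∀ k : ℕ, (∫ y in (-b)..b, (b^2 - y^2) ^ (((k:ℝ)-1)/2))
      = (2*b)^k * (Real.Gamma (((k:ℝ)+1)/2)^2 / (k.factorial : ℝ)) := by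
    intro k
    have h := J_val hb (hpk k)
    rw [show 2*(((k:ℝ)-1)/2)+1 = ((k:ℕ):ℝ) by push_cast; ring,
      show ((k:ℝ)-1)/2+1 = ((k:ℝ)+1)/2 by ring,
      show 2*(((k:ℝ)-1)/2)+2 = (k:ℝ)+1 by ring, Real.Gamma_nat_eq_factorial,
      Real.rpow_natCast] at h
    exact h
  -- integrability
  have hint : ∀ k : ℕ, IntegrableOn (F k) (Set.Ioc (-b) b) volume := by
    intro k
    have := ((J_integrable hb (hpk k)).const_mul (a^k / k.factorial))
    rwa [intervalIntegrable_iff_integrableOn_Ioc_of_le hbb] at this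
  -- the norm integrals
  have Inorm : ∀ k : ℕ, (∫ y in Set.Ioc (-b) b, ‖F k y‖) = ∫ y in Set.Ioc (-b) b, F k y := by
    intro k
    apply setIntegral_congr_fun measurableSet_Ioc
    intro y hy
    apply Real.norm_of_nonneg
    have hx : (0:ℝ) ≤ b^2 - y^2 := by nlinarith [hy.1, hy.2]
    have := Real.rpow_nonneg hx (((k:ℝ)-1)/2)
    positivity
  have Ival : ∀ k : ℕ, (∫ y in Set.Ioc (-b) b, F k y)
      = π * ((a*b/2)^k / Real.Gamma ((k:ℝ)/2+1)^2) := by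
    intro k
    have h2 : (∫ y in Set.Ioc (-b) b, F k y)
        = a^k / k.factorial * ∫ y in (-b)..b, (b^2 - y^2) ^ (((k:ℝ)-1)/2) := by
      rw [intervalIntegral.integral_of_le hbb, ← MeasureTheory.integral_const_mul]
    rw [h2, Jk k]
    -- now pure algebra with gamma_dup
    have hd := gamma_dup k
    have hfac : (0:ℝ) < k.factorial := by exact_mod_cast k.factorial_pos
    have h2k : (0:ℝ) < 2^k := by positivity
    have hG := hGpos k
    have hGG : Real.Gamma (((k:ℝ)+1)/2) = Real.sqrt π * k.factorial / 2^k
        / Real.Gamma ((k:ℝ)/2+1) := by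
      field_simp at hd ⊢; linarith [hd]
    rw [hGG]
    have hpi : Real.sqrt π ^ 2 = π := Real.sq_sqrt Real.pi_pos.le
    field_simp
    ring_nf
    rw [show Real.sqrt π ^ 2 = π from hpi]
    have h22 : ((1:ℝ)/2)^k * 2^(k*2) = 2^k := by
      rw [pow_mul, one_div_pow, sq, ← mul_assoc, one_div_mul_cancel h2k.ne', one_mul]
    rw [mul_assoc _ ((1/2:ℝ)^k), h22]
  -- summability of the norm integrals
  have hsum : Summable (fun k : ℕ => π * ((a*b/2)^k / Real.Gamma ((k:ℝ)/2+1)^2)) := by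
    apply Summable.of_nonneg_of_le
    · intro k
      have := hGpos k
      positivity
    · intro k
      show π * ((a*b/2)^k / Real.Gamma ((k:ℝ)/2+1)^2) ≤ π * ((a*b)^k / k.factorial)
      have hG := hGpos k
      have hfac : (0:ℝ) < k.factorial := by exact_mod_cast k.factorial_pos
      have hratio := gamma_ratio k
      have hd := gamma_dup k
      have h2k : (0:ℝ) < 2^k := by positivity
      have hsq : (k.factorial : ℝ) / 2^k ≤ Real.Gamma ((k:ℝ)/2+1)^2 := by
        have hs : 0 < Real.sqrt π := Real.sqrt_pos.mpr Real.pi_pos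
        have h3 : Real.sqrt π * k.factorial / 2^k ≤ Real.sqrt π * Real.Gamma ((k:ℝ)/2+1)^2 := by
          calc Real.sqrt π * k.factorial / 2^k
              = Real.Gamma (((k:ℝ)+1)/2) * Real.Gamma ((k:ℝ)/2 + 1) := hd.symm
            _ ≤ (Real.sqrt π * Real.Gamma ((k:ℝ)/2 + 1)) * Real.Gamma ((k:ℝ)/2 + 1) :=
                mul_le_mul_of_nonneg_right hratio hG.le
            _ = Real.sqrt π * Real.Gamma ((k:ℝ)/2+1)^2 := by ring
        calc (k.factorial : ℝ) / 2^k = (Real.sqrt π * k.factorial / 2^k) / Real.sqrt π := by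
              field_simp
          _ ≤ (Real.sqrt π * Real.Gamma ((k:ℝ)/2+1)^2) / Real.sqrt π := by
              apply div_le_div_of_nonneg_right h3 hs.le
          _ = Real.Gamma ((k:ℝ)/2+1)^2 := by field_simp
      have h4 : (0:ℝ) < (k.factorial:ℝ)/2^k := by positivity
      have h5 : 1 / Real.Gamma ((k:ℝ)/2+1)^2 ≤ 1 / ((k.factorial:ℝ)/2^k) :=
        one_div_le_one_div_of_le h4 hsq
      calc π * ((a*b/2)^k / Real.Gamma ((k:ℝ)/2+1)^2)
          = π * ((a*b/2)^k * (1 / Real.Gamma ((k:ℝ)/2+1)^2)) := by ring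
        _ ≤ π * ((a*b/2)^k * (1 / ((k.factorial:ℝ)/2^k))) := by
            apply mul_le_mul_of_nonneg_left
              (mul_le_mul_of_nonneg_left h5 (by positivity)) Real.pi_pos.le
        _ = π * ((a*b)^k / k.factorial) := by
            rw [div_pow (a*b) 2 k]
            field_simp
    · exact (Real.summable_pow_div_factorial (a*b)).mul_left π
  have hswap := MeasureTheory.hasSum_integral_of_summable_integral_norm
    (μ := volume.restrict (Set.Ioc (-b) b)) (F := F) (fun k => hint k)
    ((summable_congr (fun k => (Inorm k).trans (Ival k))).mpr hsum)
  have hswap2 : (∑' k : ℕ, ∫ y in Set.Ioc (-b) b, F k y)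
      = ∫ y in Set.Ioc (-b) b, ∑' k, F k y := hswap.tsum_eq
  have hae : ∀ᵐ y ∂(volume.restrict (Set.Ioc (-b) b)),
      Real.exp (a * Real.sqrt (b^2 - y^2)) / Real.sqrt (b^2 - y^2) = ∑' k, F k y := by
    have hne : ∀ᵐ y : ℝ ∂(volume.restrict (Set.Ioc (-b) b)), y ≠ b := by
      apply ae_restrict_of_ae
      refine ae_iff.mpr ?_
      simp only [not_ne_iff, Set.setOf_eq_eq_singleton]
      exact Real.volume_singleton
    filter_upwards [ae_restrict_mem measurableSet_Ioc, hne] with y hy hyb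
    have hlt : y < b := lt_of_le_of_ne hy.2 hyb
    have hx : 0 < b^2 - y^2 := by nlinarith [hy.1]
    set s := Real.sqrt (b^2 - y^2) with hs
    have hspos : 0 < s := Real.sqrt_pos.mpr hx
    have hrw : ∀ k : ℕ, F k y = (a*s)^k / k.factorial / s := by
      intro k
      have h1 : (b^2-y^2) ^ (((k:ℝ)-1)/2) = s ^ ((k:ℝ)-1) := by
        rw [show ((k:ℝ)-1)/2 = 1/2 * ((k:ℝ)-1) by ring]
        rw [show ((1:ℝ)/2 * ((k:ℝ)-1)) = (1/2) * ((k:ℝ)-1) by ring,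
          Real.rpow_mul hx.le, hs, Real.sqrt_eq_rpow]
      have h2 : s ^ ((k:ℝ)-1) = s ^ (k:ℕ) / s := by
        rw [show ((k:ℝ)-1) = (k:ℝ) - 1 by ring, Real.rpow_sub hspos, Real.rpow_one,
          Real.rpow_natCast]
      show a^k / k.factorial * (b^2 - y^2) ^ (((k:ℝ)-1)/2) = (a*s)^k / k.factorial / s
      rw [h1, h2, mul_pow]
      ring
    have ht : ∑' k, F k y = (∑' k : ℕ, (a*s)^k / k.factorial) / s := by
      rw [tsum_congr hrw, tsum_div_const]
    have hexp : Real.exp (a*s) = ∑' k : ℕ, (a*s)^k / k.factorial := by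
      rw [Real.exp_eq_exp_ℝ, NormedSpace.exp_eq_tsum_div]
    rw [ht, ← hexp]
  have hLHS : (∫ y in (-b)..b, Real.exp (a * Real.sqrt (b^2-y^2)) / Real.sqrt (b^2-y^2))
      = ∫ y in Set.Ioc (-b) b, ∑' k, F k y := by
    rw [intervalIntegral.integral_of_le hbb]
    exact integral_congr_ae hae
  rw [hLHS, ← hswap2, ← tsum_mul_left]
  exact tsum_congr fun k => (Ival k).symm ▸ rfl


/-- the marginal along `y₂` of the planar projection of `Y₃(t)`:
for `|y₁| < ct`, with `b = √(c²t² - y₁²)`,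
`∫_{-b}^{b} λ e^{(λ/c)√(c²t²-y₁²-y₂²)} / (2πc(e^{λt}-1)√(c²t²-y₁²-y₂²)) dy₂
  = (λ/(2c(e^{λt}-1))) Σ_{k=0}^∞ ((λ/(2c))√(c²t²-y₁²))^k / (Γ(k/2+1))²`. -/
theorem statement19 (lam c t y₁ : ℝ) (hlam : 0 < lam) (hc : 0 < c) (ht : 0 < t)
    (hy : |y₁| < c * t) :
    (∫ y₂ in (-Real.sqrt (c ^ 2 * t ^ 2 - y₁ ^ 2))..
        (Real.sqrt (c ^ 2 * t ^ 2 - y₁ ^ 2)),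
      lam * Real.exp (lam / c * Real.sqrt (c ^ 2 * t ^ 2 - y₁ ^ 2 - y₂ ^ 2)) /
        (2 * π * c * (Real.exp (lam * t) - 1) *
          Real.sqrt (c ^ 2 * t ^ 2 - y₁ ^ 2 - y₂ ^ 2)))
    = lam / (2 * c * (Real.exp (lam * t) - 1)) *
        ∑' k : ℕ,
          (lam / (2 * c) * Real.sqrt (c ^ 2 * t ^ 2 - y₁ ^ 2)) ^ k /
            (Real.Gamma ((k : ℝ) / 2 + 1)) ^ 2 := by
  have hy2 : y₁^2 < c^2 * t^2 := by
    nlinarith [sq_abs y₁, abs_nonneg y₁, mul_pos hc ht]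
  set b := Real.sqrt (c^2*t^2 - y₁^2) with hbdef
  have hbpos : 0 < b := Real.sqrt_pos.mpr (by linarith)
  have hbsq : b^2 = c^2*t^2 - y₁^2 := Real.sq_sqrt (by linarith)
  have hE : 0 < Real.exp (lam*t) - 1 := by
    have h1 : (1:ℝ) < Real.exp (lam*t) := by
      rw [← Real.exp_zero]
      exact Real.exp_lt_exp.mpr (by positivity)
    linarith
  have h1 : ∀ y₂ : ℝ, c^2*t^2 - y₁^2 - y₂^2 = b^2 - y₂^2 := by
    intro y₂; rw [hbsq]
  simp_rw [h1]
  have h2 : (fun y₂ : ℝ => lam * Real.exp (lam/c * Real.sqrt (b^2 - y₂^2)) /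
        (2*π*c*(Real.exp (lam*t) - 1)*Real.sqrt (b^2-y₂^2)))
      = fun y₂ : ℝ => (lam/(2*π*c*(Real.exp (lam*t) - 1))) *
        (Real.exp ((lam/c) * Real.sqrt (b^2-y₂^2)) / Real.sqrt (b^2-y₂^2)) := by
    funext y₂
    rcases eq_or_ne (Real.sqrt (b^2 - y₂^2)) 0 with h | h
    · simp [h]
    · have hC : (2*π*c*(Real.exp (lam*t) - 1)) ≠ 0 := by positivity
      field_simp
  rw [h2, intervalIntegral.integral_const_mul, core (by positivity : 0 < lam/c) hbpos]
  rw [show lam/c*b/2 = lam/(2*c)*b by ring]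
  have hπ : (0:ℝ) < π := Real.pi_pos
  field_simp
end
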